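/- arXiv:1912.00408 — 2 statements merged into one kernel-verified Lean document; each statement's English description precedes it below -/
import Mathlib

section
/- Let Δ ⊆ ℝⁿ (n ≥ 2) be a Delzant polytope and let F = {x ∈ ℝⁿ : xₙ = a} be a parallel hyperplane for Δ that meets the interior of Δ and contains no edge of Δ. Let G be a facet of Δ (an (n−1)-dimensional face) contained in a hyperplane {x ∈ ℝⁿ : ⟨x,u⟩ = λ} whose normal vector u satisfies ⟨u,eₙ⟩ ≠ 0. Then G ∩ F = ∅; consequently, since Δ is compact, the slice F ∩ Δ has positive distance from G. -/
noncomputable section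

/-- `E` is an edge (one-dimensional face) of `Δ`: an extreme convex subset whose
affine span has one-dimensional direction. -/
def IsEdge {m : ℕ} (Δ E : Set (Fin m → ℝ)) : Prop :=
  IsExtreme ℝ Δ E ∧ Convex ℝ E ∧ Module.finrank ℝ (affineSpan ℝ E).direction = 1

/-- `Δ` is a Delzant polytope in `ℝ^m` (with respect to the lattice `ℤ^m`):
a compact convex polytope (convex hull of finitely many points) of full dimension `m`
such that at each vertex `v` (extreme point) there is a family of integer vectors
forming a `ℤ`-basis of `ℤ^m` whose directions realize the edges at `v`, and every
edge of `Δ` through `v` is one of them (so `v` is simple with Delzant edge data). -/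
def IsDelzant {m : ℕ} (Δ : Set (Fin m → ℝ)) : Prop :=
  (∃ S : Finset (Fin m → ℝ), Δ = convexHull ℝ (S : Set (Fin m → ℝ))) ∧
  affineSpan ℝ Δ = ⊤ ∧
  ∀ v ∈ Set.extremePoints ℝ Δ,
    ∃ u : Fin m → (Fin m → ℤ),
      (LinearIndependent ℤ u ∧ Submodule.span ℤ (Set.range u) = ⊤) ∧
      (∀ i : Fin m, ∃ T : ℝ, 0 < T ∧
        IsEdge Δ ((fun t : ℝ => v + t • fun j => (u i j : ℝ)) '' Set.Icc 0 T)) ∧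
      (∀ E : Set (Fin m → ℝ), IsEdge Δ E → v ∈ E →
        ∃ i : Fin m, ∃ T : ℝ, 0 < T ∧
          E = (fun t : ℝ => v + t • fun j => (u i j : ℝ)) '' Set.Icc 0 T)

/-- The hyperplane `{x | x_n = a}` is a parallel hyperplane for `Δ`: it meets `Δ`,
and every edge of `Δ` that meets it without being contained in it is orthogonal to it,
i.e. points of such an edge differ only in the last coordinate. -/
def IsParallelAt {n : ℕ} (Δ : Set (Fin (n + 1) → ℝ)) (a : ℝ) : Prop :=
  (∃ x ∈ Δ, x (Fin.last n) = a) ∧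
  ∀ E : Set (Fin (n + 1) → ℝ), IsEdge Δ E →
    (∃ x ∈ E, x (Fin.last n) = a) → ¬(∀ x ∈ E, x (Fin.last n) = a) →
    ∀ x ∈ E, ∀ y ∈ E, ∀ i : Fin n, x i.castSucc = y i.castSucc

/-- The standard dot product on `ℝ^m`. -/
def dotp {m : ℕ} (u v : Fin m → ℝ) : ℝ := ∑ i, u i * v i

open Finset

section Helpers
variable {E : Type*} [AddCommGroup E] [Module ℝ E]

lemma mem_convexHull_finset_iff {W : Finset E} {x : E} :
    x ∈ convexHull ℝ (W : Set E) ↔ ∃ w : E → ℝ,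
      (∀ y ∈ W, 0 ≤ w y) ∧ ∑ y ∈ W, w y = 1 ∧ ∑ y ∈ W, w y • y = x := by
  rw [Finset.convexHull_eq]
  constructor
  · rintro ⟨w, h0, h1, h2⟩
    refine ⟨w, h0, h1, by rw [← h2, Finset.centerMass_eq_of_sum_1 _ _ h1]; rfl⟩
  · rintro ⟨w, h0, h1, h2⟩
    exact ⟨w, h0, h1, by rw [Finset.centerMass_eq_of_sum_1 _ _ h1]; exact h2⟩

/-- Absorption: an extreme subset of a polytope contains every generator used with
positive weight in a representation of one of its points. -/
lemma extreme_absorb {W : Finset E} {B : Set E} (hB : IsExtreme ℝ (convexHull ℝ (W : Set E)) B)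
    {w : E → ℝ} (h0 : ∀ y ∈ W, 0 ≤ w y) (h1 : ∑ y ∈ W, w y = 1)
    (hx : ∑ y ∈ W, w y • y ∈ B) {v : E} (hv : v ∈ W) (hwv : 0 < w v) : v ∈ B := by
  classical
  have herase : ∑ y ∈ W.erase v, w y = 1 - w v := by
    have := Finset.add_sum_erase W w hv
    rw [h1] at this; linarith
  by_cases hone : w v = 1
  · -- all other weights vanish
    have hz : ∀ y ∈ W.erase v, w y = 0 := by
      have hsub : ∑ y ∈ W.erase v, w y = 0 := by rw [herase, hone]; ring
      exact fun y hy => (Finset.sum_eq_zero_iff_of_nonneg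
        (fun y hy => h0 y (Finset.mem_of_mem_erase hy))).1 hsub y hy
    have : ∑ y ∈ W, w y • y = v := by
      rw [← Finset.add_sum_erase W _ hv, hone, one_smul,
        Finset.sum_eq_zero (fun y hy => by rw [hz y hy, zero_smul]), add_zero]
    rwa [this] at hx
  · have hlt : w v < 1 := lt_of_le_of_ne (by
      calc w v ≤ ∑ y ∈ W, w y := Finset.single_le_sum h0 hv
      _ = 1 := h1) hone
    set c := 1 - w v with hc
    have hcpos : 0 < c := by rw [hc]; linarith
    set z := c⁻¹ • ∑ y ∈ W.erase v, w y • y with hzdef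
    have hzW : z ∈ convexHull ℝ (W : Set E) := by
      apply convexHull_mono (Finset.coe_subset.2 (Finset.erase_subset v W))
      rw [mem_convexHull_finset_iff]
      refine ⟨fun y => c⁻¹ * w y, ?_, ?_, ?_⟩
      · exact fun y hy => mul_nonneg (le_of_lt (inv_pos.2 hcpos))
          (h0 y (Finset.mem_of_mem_erase hy))
      · rw [← Finset.mul_sum, herase, inv_mul_cancel₀ (ne_of_gt hcpos)]
      · rw [hzdef, Finset.smul_sum]
        exact Finset.sum_congr rfl (fun y _ => by rw [mul_smul])
    have hseg : (∑ y ∈ W, w y • y) ∈ openSegment ℝ v z := by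
      refine ⟨w v, c, hwv, hcpos, by rw [hc]; ring, ?_⟩
      rw [hzdef, smul_inv_smul₀ (ne_of_gt hcpos)]
      rw [← Finset.add_sum_erase W _ hv]
    exact (hB.2 (subset_convexHull ℝ _ hv) hzW hx hseg)

end Helpers
open Finset
section Helpers2
variable {E : Type*} [AddCommGroup E] [Module ℝ E] [DecidableEq E]

lemma minkowski_aux : ∀ (N : ℕ) (S : Finset E), S.card ≤ N →
    ∃ W : Finset E, convexHull ℝ (W : Set E) = convexHull ℝ (S : Set E) ∧
      ∀ w ∈ W, w ∉ convexHull ℝ ((W.erase w : Finset E) : Set E) := by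
  intro N
  induction N with
  | zero =>
    intro S hS
    exact ⟨S, rfl, fun w hw => absurd (Finset.card_pos.2 ⟨w, hw⟩) (by omega)⟩
  | succ N ih =>
    intro S hS
    by_cases h : ∃ s ∈ S, s ∈ convexHull ℝ ((S.erase s : Finset E) : Set E)
    · obtain ⟨s, hsS, hs⟩ := h
      have hcard : (S.erase s).card ≤ N := by
        have := Finset.card_erase_of_mem hsS
        have := Finset.card_pos.2 ⟨s, hsS⟩
        omega
      obtain ⟨W, hW1, hW2⟩ := ih (S.erase s) hcard
      refine ⟨W, ?_, hW2⟩
      rw [hW1]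
      apply Set.Subset.antisymm (convexHull_mono (Finset.coe_subset.2 (Finset.erase_subset s S)))
      apply convexHull_min _ (convex_convexHull ℝ _)
      intro y hyS
      by_cases hys : y = s
      · rw [hys]; exact hs
      · exact subset_convexHull ℝ _ (Finset.mem_coe.2 (Finset.mem_erase.2 ⟨hys, hyS⟩))
    · push_neg at h
      exact ⟨S, rfl, h⟩

lemma vertex_extreme {W : Finset E} {w : E} (hw : w ∈ W)
    (h : w ∉ convexHull ℝ ((W.erase w : Finset E) : Set E)) :
    w ∈ Set.extremePoints ℝ (convexHull ℝ (W : Set E)) := by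
  refine ⟨subset_convexHull ℝ _ hw, ?_⟩
  intro x₁ hx₁ x₂ hx₂ hseg
  rw [mem_convexHull_finset_iff] at hx₁ hx₂
  obtain ⟨α, hα0, hα1, hαx⟩ := hx₁
  obtain ⟨β, hβ0, hβ1, hβx⟩ := hx₂
  obtain ⟨t₁, t₂, ht₁, ht₂, hts, heq⟩ := hseg
  have hγ0 : ∀ y ∈ W, 0 ≤ t₁ * α y + t₂ * β y := fun y hy =>
    add_nonneg (mul_nonneg ht₁.le (hα0 y hy)) (mul_nonneg ht₂.le (hβ0 y hy))
  have hγ1 : ∑ y ∈ W, (t₁ * α y + t₂ * β y) = 1 := by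
    simp only [Finset.sum_add_distrib, ← Finset.mul_sum, hα1, hβ1]
    rw [mul_one, mul_one]; exact hts
  have hγx : ∑ y ∈ W, (t₁ * α y + t₂ * β y) • y = w := by
    simp only [add_smul, mul_smul, Finset.sum_add_distrib, ← Finset.smul_sum, hαx, hβx]
    exact heq
  set γ : E → ℝ := fun q => t₁ * α q + t₂ * β q with hγ
  have herase : ∑ y ∈ W.erase w, γ y = 1 - γ w := by
    have h2 : γ w + ∑ y ∈ W.erase w, γ y = ∑ y ∈ W, γ y := Finset.add_sum_erase W γ hw
    rw [hγ1] at h2; linarith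
  have hle : γ w ≤ 1 := by
    calc γ w ≤ ∑ y ∈ W, γ y := Finset.single_le_sum hγ0 hw
    _ = 1 := hγ1
  rcases lt_or_eq_of_le hle with hlt | hone
  · exfalso
    apply h
    set c := 1 - γ w with hc
    have hcpos : 0 < c := by rw [hc]; linarith
    have h2 : γ w • w + ∑ y ∈ W.erase w, γ y • y = w := by
      have h2' : γ w • w + ∑ y ∈ W.erase w, γ y • y = ∑ y ∈ W, γ y • y :=
        Finset.add_sum_erase W (fun y => γ y • y) hw
      rw [h2', hγx]
    have h3 : ∑ y ∈ W.erase w, γ y • y = c • w := by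
      rw [hc, sub_smul, one_smul]; exact eq_sub_of_add_eq' h2
    apply mem_convexHull_finset_iff.2
    refine ⟨fun y => c⁻¹ * γ y, fun y hy => mul_nonneg (inv_pos.2 hcpos).le
      (hγ0 y (Finset.mem_of_mem_erase hy)), ?_, ?_⟩
    · rw [← Finset.mul_sum, herase, inv_mul_cancel₀ (ne_of_gt hcpos)]
    · have : ∑ y ∈ W.erase w, (c⁻¹ * γ y) • y = c⁻¹ • ∑ y ∈ W.erase w, γ y • y := by
        rw [Finset.smul_sum]
        exact Finset.sum_congr rfl (fun y _ => by rw [mul_smul])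
      rw [this, h3, inv_smul_smul₀ (ne_of_gt hcpos)]
  · -- γ w = 1 : all other weights vanish, including in α and β
    have hz : ∀ y ∈ W.erase w, γ y = 0 := by
      have hsub : ∑ y ∈ W.erase w, γ y = 0 := by rw [herase, ← hone]; ring
      exact fun y hy => (Finset.sum_eq_zero_iff_of_nonneg
        (fun y hy => hγ0 y (Finset.mem_of_mem_erase hy))).1 hsub y hy
    have hαz : ∀ y ∈ W.erase w, α y = 0 := by
      intro y hy
      have h1 : t₁ * α y + t₂ * β y = 0 := hz y hy
      have h2 := hα0 y (Finset.mem_of_mem_erase hy)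
      have h3 := hβ0 y (Finset.mem_of_mem_erase hy)
      nlinarith
    have hβz : ∀ y ∈ W.erase w, β y = 0 := by
      intro y hy
      have h1 : t₁ * α y + t₂ * β y = 0 := hz y hy
      have h2 := hα0 y (Finset.mem_of_mem_erase hy)
      have h3 := hβ0 y (Finset.mem_of_mem_erase hy)
      nlinarith
    have hαw : α w = 1 := by
      have h2 : α w + ∑ y ∈ W.erase w, α y = ∑ y ∈ W, α y := Finset.add_sum_erase W α hw
      rw [hα1, Finset.sum_eq_zero hαz, add_zero] at h2; linarith
    have hβw : β w = 1 := by
      have h2 : β w + ∑ y ∈ W.erase w, β y = ∑ y ∈ W, β y := Finset.add_sum_erase W β hw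
      rw [hβ1, Finset.sum_eq_zero hβz, add_zero] at h2; linarith
    refine (⟨?_, ?_⟩ : x₁ = w ∧ x₂ = w).1
    · rw [← hαx]
      have h2 : α w • w + ∑ y ∈ W.erase w, α y • y = ∑ y ∈ W, α y • y :=
        Finset.add_sum_erase W (fun y => α y • y) hw
      rw [← h2, hαw, one_smul,
        Finset.sum_eq_zero (fun y hy => by rw [hαz y hy, zero_smul]), add_zero]
    · rw [← hβx]
      have h2 : β w • w + ∑ y ∈ W.erase w, β y • y = ∑ y ∈ W, β y • y :=
        Finset.add_sum_erase W (fun y => β y • y) hw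
      rw [← h2, hβw, one_smul,
        Finset.sum_eq_zero (fun y hy => by rw [hβz y hy, zero_smul]), add_zero]

end Helpers2
/-- No extreme point (vertex) of `Δ` lies on the parallel hyperplane. -/
lemma no_vertex_in_slice {n : ℕ} (hn : 1 ≤ n) {Δ : Set (Fin (n + 1) → ℝ)} {a : ℝ}
    (hΔ : IsDelzant Δ) (hpar : IsParallelAt Δ a)
    (hnoedge : ∀ E : Set (Fin (n + 1) → ℝ), IsEdge Δ E →
      ¬(∀ x ∈ E, x (Fin.last n) = a)) :
    ∀ v ∈ Set.extremePoints ℝ Δ, v (Fin.last n) ≠ a := by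
  classical
  intro v hv hva
  obtain ⟨uu, ⟨hli, _⟩, hedges, _⟩ := hΔ.2.2 v hv
  -- every edge direction at `v` is vertical
  have hvert : ∀ i : Fin (n + 1), ∀ j : Fin n, uu i j.castSucc = 0 := by
    intro i j
    obtain ⟨T, hT, hE⟩ := hedges i
    have hvE : v ∈ (fun t : ℝ => v + t • fun k => (uu i k : ℝ)) '' Set.Icc 0 T :=
      ⟨0, ⟨le_refl 0, hT.le⟩, by simp⟩
    have hyE : (v + T • fun k => (uu i k : ℝ)) ∈
        (fun t : ℝ => v + t • fun k => (uu i k : ℝ)) '' Set.Icc 0 T :=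
      ⟨T, ⟨hT.le, le_refl T⟩, rfl⟩
    have h1 := hpar.2 _ hE ⟨v, hvE, hva⟩ (hnoedge _ hE)
      (v + T • fun k => (uu i k : ℝ)) hyE v hvE j
    have h2 : v j.castSucc + T * (uu i j.castSucc : ℝ) = v j.castSucc := h1
    have h3 : (uu i j.castSucc : ℝ) = 0 := by
      have h4 : T * (uu i j.castSucc : ℝ) = 0 := by linarith
      rcases mul_eq_zero.1 h4 with h | h
      · exact absurd h (ne_of_gt hT)
      · exact h
    exact_mod_cast h3
  -- two distinct indices give dependent vertical vectors
  set i0 : Fin (n + 1) := ⟨0, by omega⟩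
  set i1 : Fin (n + 1) := ⟨1, by omega⟩
  have h01 : i0 ≠ i1 := Fin.ne_of_val_ne (by norm_num)
  set A : ℤ := uu i0 (Fin.last n) with hA
  set B : ℤ := uu i1 (Fin.last n) with hB
  set g : Fin (n + 1) → ℤ := fun i => if i = i0 then B else if i = i1 then -A else 0 with hg
  have hsum : ∑ i : Fin (n + 1), g i • uu i = B • uu i0 + (-A) • uu i1 := by
    rw [← Finset.sum_subset (Finset.subset_univ ({i0, i1} : Finset (Fin (n + 1))))
      (fun x _ hx => ?_)]
    · rw [Finset.sum_pair h01]
      simp [hg, h01, if_neg (Ne.symm h01)]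
    · have hx0 : x ≠ i0 := fun h => hx (by simp [h])
      have hx1 : x ≠ i1 := fun h => hx (by simp [h])
      simp [hg, hx0, hx1]
  have hzero : ∑ i : Fin (n + 1), g i • uu i = 0 := by
    rw [hsum]
    funext k
    rcases Fin.eq_castSucc_or_eq_last k with ⟨j, rfl⟩ | rfl
    · simp [hvert i0 j, hvert i1 j]
    · simp [← hA, ← hB]; ring
  have hB0 : B = 0 := by
    have := Fintype.linearIndependent_iff.1 hli g hzero i0
    simpa [hg] using this
  have hu1 : uu i1 = 0 := by
    funext k
    rcases Fin.eq_castSucc_or_eq_last k with ⟨j, rfl⟩ | rfl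
    · exact hvert i1 j
    · exact hB0
  exact hli.ne_zero i1 hu1
/-- Rotation lemma for open segments: if `p` lies strictly between `x` and `p'`, and `x` lies
strictly between `x₁` and `x₂`, then `p` lies strictly between `x₁` and some point `w` of the
segment from `x₂` to `p'`. -/
lemma seg_rot {E : Type*} [AddCommGroup E] [Module ℝ E] {p x x₁ x₂ p' : E}
    (h1 : p ∈ openSegment ℝ x p') (h2 : x ∈ openSegment ℝ x₁ x₂) :
    ∃ w ∈ segment ℝ x₂ p', p ∈ openSegment ℝ x₁ w := by
  obtain ⟨s₁, s₂, hs₁, hs₂, hs, hp⟩ := h1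
  obtain ⟨t₁, t₂, ht₁, ht₂, ht, hx⟩ := h2
  set b := s₁ * t₂ + s₂ with hb
  have hbpos : 0 < b := add_pos (mul_pos hs₁ ht₂) hs₂
  have hb1 : b * (s₁ * t₂ / b) = s₁ * t₂ := by field_simp
  have hb2 : b * (s₂ / b) = s₂ := by field_simp
  refine ⟨(s₁ * t₂ / b) • x₂ + (s₂ / b) • p',
    ⟨s₁ * t₂ / b, s₂ / b, by positivity, by positivity, by field_simp; exact hb.symm, rfl⟩, ?_⟩
  refine ⟨s₁ * t₁, b, mul_pos hs₁ ht₁, hbpos, by rw [hb]; linear_combination s₁ * ht + hs, ?_⟩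
  rw [smul_add, smul_smul, smul_smul, hb1, hb2, ← hp, ← hx]
  module
/-- Let `Δ ⊆ ℝ^{n+1}` (`n ≥ 1`) be a Delzant polytope and `F = {x | x_{n+1} = a}` a
parallel hyperplane for `Δ` meeting the interior of `Δ` and containing no edge of `Δ`.
If `G` is a facet of `Δ` (an `n`-dimensional face of the `(n+1)`-dimensional polytope)
contained in a hyperplane `{x | ⟨x, u⟩ = λ}` whose normal `u` satisfies
`⟨u, e_{n+1}⟩ ≠ 0`, then `G ∩ F = ∅`, and the slice `F ∩ Δ` has positive distance
from `G`. -/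
theorem facet_disjoint_from_parallel_slice
    (n : ℕ) (hn : 1 ≤ n) (Δ : Set (Fin (n + 1) → ℝ)) (a : ℝ)
    (hΔ : IsDelzant Δ) (hpar : IsParallelAt Δ a)
    (hint : ∃ x ∈ interior Δ, x (Fin.last n) = a)
    (hnoedge : ∀ E : Set (Fin (n + 1) → ℝ), IsEdge Δ E →
      ¬(∀ x ∈ E, x (Fin.last n) = a))
    (G : Set (Fin (n + 1) → ℝ))
    (hGext : IsExtreme ℝ Δ G) (hGconv : Convex ℝ G)
    (hGdim : Module.finrank ℝ (affineSpan ℝ G).direction = n)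
    (u : Fin (n + 1) → ℝ) (lam : ℝ)
    (hGhyp : ∀ x ∈ G, dotp x u = lam)
    (hu : u (Fin.last n) ≠ 0) :
    G ∩ {x : Fin (n + 1) → ℝ | x (Fin.last n) = a} = ∅ ∧
    ∃ δ : ℝ, 0 < δ ∧ ∀ x ∈ G, ∀ y ∈ Δ, y (Fin.last n) = a → δ ≤ dist x y := by
  classical
  obtain ⟨S, hS⟩ := hΔ.1
  obtain ⟨W, hWS, hWvert⟩ := minkowski_aux S.card S le_rfl
  have hWΔ : convexHull ℝ (W : Set (Fin (n + 1) → ℝ)) = Δ := by rw [hWS, ← hS]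
  have hWext : ∀ w ∈ W, w ∈ Set.extremePoints ℝ Δ := by
    intro w hw
    have := vertex_extreme hw (hWvert w hw)
    rwa [hWΔ] at this
  have hWa : ∀ w ∈ W, w (Fin.last n) ≠ a := fun w hw =>
    no_vertex_in_slice hn hΔ hpar hnoedge w (hWext w hw)
  have hΔconv : Convex ℝ Δ := by rw [hS]; exact convex_convexHull ℝ _
  have hΔcomp : IsCompact Δ := by rw [hS]; exact (S.finite_toSet.isCompact_convexHull ℝ)
  have hGext' : IsExtreme ℝ (convexHull ℝ (W : Set (Fin (n + 1) → ℝ))) G := by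
    rw [hWΔ]; exact hGext
  -- `G` is itself a polytope, hence compact
  have hGW : G = convexHull ℝ ((W.filter (· ∈ G) : Finset _) : Set (Fin (n + 1) → ℝ)) := by
    apply Set.Subset.antisymm
    · intro x hxG
      have hxΔ : x ∈ convexHull ℝ (W : Set (Fin (n + 1) → ℝ)) := by
        rw [hWΔ]; exact hGext.1 hxG
      obtain ⟨w, h0, h1, h2⟩ := mem_convexHull_finset_iff.1 hxΔ
      have hsupp : ∀ y ∈ W, y ∉ W.filter (· ∈ G) → w y = 0 := by
        intro y hy hny
        by_contra hne
        have hpos : 0 < w y := lt_of_le_of_ne (h0 y hy) (Ne.symm hne)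
        exact hny (Finset.mem_filter.2 ⟨hy,
          extreme_absorb hGext' h0 h1 (h2.symm ▸ hxG) hy hpos⟩)
      rw [mem_convexHull_finset_iff]
      refine ⟨w, fun y hy => h0 y (Finset.mem_of_mem_filter y hy), ?_, ?_⟩
      · rw [Finset.sum_subset (Finset.filter_subset _ W) hsupp]; exact h1
      · rw [Finset.sum_subset (Finset.filter_subset _ W)
          (fun y hy hny => by rw [hsupp y hy hny, zero_smul])]
        exact h2
    · apply convexHull_min _ hGconv
      intro y hy
      exact (Finset.mem_filter.1 hy).2
  have hGcomp : IsCompact G := by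
    rw [hGW]; exact ((W.filter (· ∈ G)).finite_toSet.isCompact_convexHull ℝ)
  -- Main disjointness claim
  have key : G ∩ {x : Fin (n + 1) → ℝ | x (Fin.last n) = a} = ∅ := by
    rw [Set.eq_empty_iff_forall_notMem]
    rintro p₀ ⟨hp₀G, hp₀a⟩
    set K := G ∩ {x : Fin (n + 1) → ℝ | x (Fin.last n) = a} with hKdef
    have hKcomp : IsCompact K := hGcomp.inter_right
      (isClosed_eq (continuous_apply (Fin.last n)) continuous_const)
    have hhyp : Convex ℝ {x : Fin (n + 1) → ℝ | x (Fin.last n) = a} := by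
      intro x hx y hy t₁ t₂ ht₁ ht₂ hts
      have hx' : x (Fin.last n) = a := hx
      have hy' : y (Fin.last n) = a := hy
      show (t₁ • x + t₂ • y) (Fin.last n) = a
      have : (t₁ • x + t₂ • y) (Fin.last n) = t₁ * x (Fin.last n) + t₂ * y (Fin.last n) := rfl
      rw [this, hx', hy']
      linear_combination a * hts
    have hKconv : Convex ℝ K := hGconv.inter hhyp
    obtain ⟨p, hpK⟩ := hKcomp.extremePoints_nonempty ⟨p₀, hp₀G, hp₀a⟩
    have hpG : p ∈ G := hpK.1.1
    have hpa : p (Fin.last n) = a := hpK.1.2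
    have hpΔ : p ∈ Δ := hGext.1 hpG
    -- the set of vertices used with positive weight in some representation of p
    set gr : ((Fin (n + 1) → ℝ) → ℝ) → Prop := fun w =>
      (∀ y ∈ W, 0 ≤ w y) ∧ ∑ y ∈ W, w y = 1 ∧ ∑ y ∈ W, w y • y = p with hgr
    set V : Finset (Fin (n + 1) → ℝ) := W.filter (fun v => ∃ w, gr w ∧ 0 < w v) with hVdef
    have hVW : V ⊆ W := Finset.filter_subset _ _
    have hp' : p ∈ convexHull ℝ (W : Set (Fin (n + 1) → ℝ)) := by rw [hWΔ]; exact hpΔ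
    obtain ⟨w₀, hw₀0, hw₀1, hw₀2⟩ := mem_convexHull_finset_iff.1 hp'
    have hVne : V.Nonempty := by
      have : ∃ y ∈ W, 0 < w₀ y := by
        by_contra hc
        push_neg at hc
        have : ∑ y ∈ W, w₀ y = 0 :=
          Finset.sum_eq_zero (fun y hy => le_antisymm (hc y hy) (hw₀0 y hy))
        rw [hw₀1] at this; norm_num at this
      obtain ⟨y, hy, hypos⟩ := this
      exact ⟨y, Finset.mem_filter.2 ⟨hy, w₀, ⟨hw₀0, hw₀1, hw₀2⟩, hypos⟩⟩
    -- average the representations to get one positive on all of V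
    have hchoice : ∀ v : {v // v ∈ V}, ∃ w, gr w ∧ 0 < w (v : Fin (n + 1) → ℝ) :=
      fun v => (Finset.mem_filter.1 v.2).2
    choose rep hrepg hreppos using hchoice
    have hcardpos : (0 : ℝ) < (V.card : ℝ) := by
      exact_mod_cast Finset.card_pos.2 hVne
    set ws : (Fin (n + 1) → ℝ) → ℝ :=
      fun y => (V.card : ℝ)⁻¹ * ∑ v ∈ V.attach, rep v y with hws
    have hws0 : ∀ y ∈ W, 0 ≤ ws y := fun y hy =>
      mul_nonneg (inv_pos.2 hcardpos).le
        (Finset.sum_nonneg (fun v _ => (hrepg v).1 y hy))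
    have hws1 : ∑ y ∈ W, ws y = 1 := by
      rw [hws]
      simp only [← Finset.mul_sum]
      rw [Finset.sum_comm]
      rw [Finset.sum_congr rfl (fun v _ => (hrepg v).2.1)]
      rw [Finset.sum_const, Finset.card_attach, nsmul_eq_mul, mul_one,
        inv_mul_cancel₀ (ne_of_gt hcardpos)]
    have hwsp : ∑ y ∈ W, ws y • y = p := by
      rw [hws]
      have hstep : ∀ y : Fin (n + 1) → ℝ,
          ((V.card : ℝ)⁻¹ * ∑ v ∈ V.attach, rep v y) • y
            = (V.card : ℝ)⁻¹ • ∑ v ∈ V.attach, rep v y • y := by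
        intro y
        rw [mul_smul, Finset.sum_smul]
      rw [Finset.sum_congr rfl (fun y _ => hstep y), ← Finset.smul_sum, Finset.sum_comm]
      rw [Finset.sum_congr rfl (fun v _ => (hrepg v).2.2)]
      rw [Finset.sum_const, Finset.card_attach]
      rw [← Nat.cast_smul_eq_nsmul ℝ, smul_smul,
        inv_mul_cancel₀ (ne_of_gt hcardpos), one_smul]
    have hwsgr : gr ws := ⟨hws0, hws1, hwsp⟩
    have hwspos : ∀ v ∈ V, 0 < ws v := by
      intro v hv
      apply mul_pos (inv_pos.2 hcardpos)
      apply Finset.sum_pos'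
      · exact fun v' _ => (hrepg v').1 v (hVW hv)
      · exact ⟨⟨v, hv⟩, Finset.mem_attach _ _, hreppos ⟨v, hv⟩⟩
    have hwssupp : ∀ y ∈ W, y ∉ V → ws y = 0 := by
      intro y hy hny
      by_contra hne
      exact hny (Finset.mem_filter.2 ⟨hy, ws, hwsgr,
        lt_of_le_of_ne (hws0 y hy) (Ne.symm hne)⟩)
    have hV1 : ∑ y ∈ V, ws y = 1 := by
      rw [Finset.sum_subset hVW hwssupp]; exact hws1
    have hVp : ∑ y ∈ V, ws y • y = p := by
      rw [Finset.sum_subset hVW (fun y hy hny => by rw [hwssupp y hy hny, zero_smul])]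
      exact hwsp
    have hpM : p ∈ convexHull ℝ (V : Set (Fin (n + 1) → ℝ)) :=
      mem_convexHull_finset_iff.2 ⟨ws, fun y hy => hws0 y (hVW hy), hV1, hVp⟩
    have hVsubΔ : convexHull ℝ (V : Set (Fin (n + 1) → ℝ)) ⊆ Δ := by
      rw [← hWΔ]; exact convexHull_mono (Finset.coe_subset.2 hVW)
    -- membership in `conv V` from a representation supported in V
    have hmemV : ∀ (w : (Fin (n + 1) → ℝ) → ℝ) (x : Fin (n + 1) → ℝ),
        (∀ y ∈ W, 0 ≤ w y) → ∑ y ∈ W, w y = 1 → ∑ y ∈ W, w y • y = x →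
        (∀ q ∈ W, 0 < w q → q ∈ V) → x ∈ convexHull ℝ (V : Set (Fin (n + 1) → ℝ)) := by
      intro w x h0 h1 h2 hsupp
      have hz : ∀ q ∈ W, q ∉ V → w q = 0 := fun q hq hnq =>
        le_antisymm (le_of_not_gt (fun hlt => hnq (hsupp q hq hlt))) (h0 q hq)
      exact mem_convexHull_finset_iff.2 ⟨w, fun y hy => h0 y (hVW hy),
        (Finset.sum_subset hVW hz).trans h1,
        (Finset.sum_subset hVW (fun q hq hnq => by rw [hz q hq hnq, zero_smul])).trans h2⟩
    -- absorption into `conv V`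
    have habs : ∀ y z : Fin (n + 1) → ℝ, y ∈ Δ → z ∈ Δ → p ∈ openSegment ℝ y z →
        y ∈ convexHull ℝ (V : Set (Fin (n + 1) → ℝ)) ∧
          z ∈ convexHull ℝ (V : Set (Fin (n + 1) → ℝ)) := by
      intro y z hy hz hseg
      have hy' : y ∈ convexHull ℝ (W : Set (Fin (n + 1) → ℝ)) := by rw [hWΔ]; exact hy
      have hz' : z ∈ convexHull ℝ (W : Set (Fin (n + 1) → ℝ)) := by rw [hWΔ]; exact hz
      obtain ⟨wy, hy0, hy1, hy2⟩ := mem_convexHull_finset_iff.1 hy'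
      obtain ⟨wz, hz0, hz1, hz2⟩ := mem_convexHull_finset_iff.1 hz'
      obtain ⟨t₁, t₂, ht₁, ht₂, hts, heq⟩ := hseg
      have hγ0 : ∀ q ∈ W, 0 ≤ t₁ * wy q + t₂ * wz q := fun q hq =>
        add_nonneg (mul_nonneg ht₁.le (hy0 q hq)) (mul_nonneg ht₂.le (hz0 q hq))
      have hγ1 : ∑ q ∈ W, (t₁ * wy q + t₂ * wz q) = 1 := by
        simp only [Finset.sum_add_distrib, ← Finset.mul_sum, hy1, hz1]
        rw [mul_one, mul_one]; exact hts
      have hγ2 : ∑ q ∈ W, (t₁ * wy q + t₂ * wz q) • q = p := by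
        simp only [add_smul, mul_smul, Finset.sum_add_distrib, ← Finset.smul_sum, hy2, hz2]
        exact heq
      have hγgr : gr (fun q => t₁ * wy q + t₂ * wz q) := ⟨hγ0, hγ1, hγ2⟩
      constructor
      · refine hmemV wy y hy0 hy1 hy2 (fun q hq hpos => Finset.mem_filter.2
          ⟨hq, (fun q' => t₁ * wy q' + t₂ * wz q'), hγgr, ?_⟩)
        show 0 < t₁ * wy q + t₂ * wz q
        have := mul_nonneg ht₂.le (hz0 q hq)
        nlinarith
      · refine hmemV wz z hz0 hz1 hz2 (fun q hq hpos => Finset.mem_filter.2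
          ⟨hq, (fun q' => t₁ * wy q' + t₂ * wz q'), hγgr, ?_⟩)
        show 0 < t₁ * wy q + t₂ * wz q
        have := mul_nonneg ht₁.le (hy0 q hq)
        nlinarith
    -- directions realizable inside `conv V` through `p`
    set Dset : (Fin (n + 1) → ℝ) → Prop := fun d =>
      ∃ c : (Fin (n + 1) → ℝ) → ℝ, ∑ v ∈ V, c v = 0 ∧ ∑ v ∈ V, c v • v = d with hDdef
    have hDsub : ∀ d₁ d₂, Dset d₁ → Dset d₂ → Dset (d₁ - d₂) := by
      rintro d₁ d₂ ⟨c₁, hc₁0, hc₁⟩ ⟨c₂, hc₂0, hc₂⟩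
      refine ⟨fun v => c₁ v - c₂ v, ?_, ?_⟩
      · rw [Finset.sum_sub_distrib, hc₁0, hc₂0, sub_zero]
      · rw [Finset.sum_congr rfl (fun v _ => sub_smul (c₁ v) (c₂ v) v),
          Finset.sum_sub_distrib, hc₁, hc₂]
    have hDsmul : ∀ (s : ℝ) d, Dset d → Dset (s • d) := by
      rintro s d ⟨c, hc0, hc⟩
      refine ⟨fun v => s * c v, ?_, ?_⟩
      · rw [← Finset.mul_sum, hc0, mul_zero]
      · rw [Finset.sum_congr rfl (fun v _ => mul_smul s (c v) v), ← Finset.smul_sum, hc]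
    have hDofM : ∀ x ∈ convexHull ℝ (V : Set (Fin (n + 1) → ℝ)), Dset (x - p) := by
      intro x hx
      obtain ⟨μ, hμ0, hμ1, hμ2⟩ := mem_convexHull_finset_iff.1 hx
      refine ⟨fun q => μ q - ws q, ?_, ?_⟩
      · rw [Finset.sum_sub_distrib, hμ1, hV1, sub_self]
      · rw [Finset.sum_congr rfl (fun v _ => sub_smul (μ v) (ws v) v),
          Finset.sum_sub_distrib, hμ2, hVp]
    -- small moves along realizable directions stay in `conv V`
    have hmove : ∀ d, Dset d → ∃ ε : ℝ, 0 < ε ∧ ∀ t : ℝ, |t| ≤ ε →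
        p + t • d ∈ convexHull ℝ (V : Set (Fin (n + 1) → ℝ)) := by
      rintro d ⟨c, hc0, hcd⟩
      set ε := V.inf' hVne (fun v => ws v / (|c v| + 1)) with hε
      have hεpos : 0 < ε := by
        rw [hε, Finset.lt_inf'_iff]
        intro v hv
        have := hwspos v hv
        exact div_pos this (by positivity)
      refine ⟨ε, hεpos, fun t ht => ?_⟩
      apply mem_convexHull_finset_iff.2
      refine ⟨fun v => ws v + t * c v, ?_, ?_, ?_⟩
      · intro v hv
        show 0 ≤ ws v + t * c v
        have h1 : ε ≤ ws v / (|c v| + 1) := Finset.inf'_le _ hv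
        have h2 : |t * c v| ≤ ws v := by
          rw [abs_mul]
          have h3 : |t| * |c v| ≤ ε * |c v| := mul_le_mul_of_nonneg_right ht (abs_nonneg _)
          have h4 : ε * |c v| ≤ ws v / (|c v| + 1) * |c v| :=
            mul_le_mul_of_nonneg_right h1 (abs_nonneg _)
          have h5 : ws v / (|c v| + 1) * |c v| ≤ ws v := by
            rw [div_mul_eq_mul_div, div_le_iff₀ (by positivity)]
            have := (hwspos v hv).le
            nlinarith [abs_nonneg (c v)]
          linarith
        linarith [neg_abs_le (t * c v)]
      · rw [Finset.sum_add_distrib, hV1, ← Finset.mul_sum, hc0, mul_zero, add_zero]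
      · rw [Finset.sum_congr rfl (fun v _ => add_smul (ws v) (t * c v) v),
          Finset.sum_add_distrib, hVp,
          Finset.sum_congr rfl (fun v _ => mul_smul t (c v) v), ← Finset.smul_sum, hcd]
    -- a generator off the hyperplane
    obtain ⟨v₁, hv₁V⟩ := hVne
    have hv₁W : v₁ ∈ W := hVW hv₁V
    have hv₁M : v₁ ∈ convexHull ℝ (V : Set (Fin (n + 1) → ℝ)) :=
      subset_convexHull ℝ _ hv₁V
    set d₀ : Fin (n + 1) → ℝ := v₁ - p with hd₀def
    have hDd₀ : Dset d₀ := hDofM v₁ hv₁M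
    have hd₀last : d₀ (Fin.last n) ≠ 0 := by
      have : d₀ (Fin.last n) = v₁ (Fin.last n) - a := by
        rw [hd₀def, ← hpa]; rfl
      rw [this, sub_ne_zero]
      exact hWa v₁ hv₁W
    have hd₀ne : d₀ ≠ 0 := fun h => hd₀last (by rw [h]; rfl)
    by_cases hhor : ∃ d, Dset d ∧ d ≠ 0 ∧ d (Fin.last n) = 0
    · -- horizontal realizable direction: contradicts extremality of p in K
      obtain ⟨d, hd, hdne, hdlast⟩ := hhor
      obtain ⟨ε, hε, hmv⟩ := hmove d hd
      set q := p + (-ε) • d with hqdef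
      set r := p + ε • d with hrdef
      have hqM := hmv (-ε) (by rw [abs_neg, abs_of_pos hε])
      have hrM := hmv ε (by rw [abs_of_pos hε])
      have hqΔ : q ∈ Δ := hVsubΔ hqM
      have hrΔ : r ∈ Δ := hVsubΔ hrM
      have hpseg : p ∈ openSegment ℝ q r := by
        refine ⟨1/2, 1/2, by norm_num, by norm_num, by norm_num, ?_⟩
        rw [hqdef, hrdef]; module
      obtain ⟨hqG, hrG⟩ := (⟨hGext.2 hqΔ hrΔ hpG hpseg, hGext.right_mem_of_mem_openSegment hqΔ hrΔ hpG hpseg⟩ : q ∈ G ∧ r ∈ G)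
      have hqa : q (Fin.last n) = a := by
        have : q (Fin.last n) = p (Fin.last n) + (-ε) * d (Fin.last n) := rfl
        rw [this, hdlast, hpa]; ring
      have hra : r (Fin.last n) = a := by
        have : r (Fin.last n) = p (Fin.last n) + ε * d (Fin.last n) := rfl
        rw [this, hdlast, hpa]; ring
      obtain ⟨hq, hr⟩ := (mem_extremePoints.1 hpK).2 _ ⟨hqG, hqa⟩ _ ⟨hrG, hra⟩ hpseg
      apply hdne
      have : ε • d = 0 := by
        have h2 : p + ε • d = p := hr
        have h3 := congrArg (fun x => x - p) h2
        simpa using h3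
      have := smul_eq_zero.1 this
      rcases this with h | h
      · exact absurd h (ne_of_gt hε)
      · exact h
    · -- no horizontal direction: `conv V` is a vertical edge, contradiction with `G`'s normal
      push_neg at hhor
      have hzero : ∀ d, Dset d → d (Fin.last n) = 0 → d = 0 := by
        intro d hd hl
        by_contra hne
        exact hhor d hd hne hl
      have hcol : ∀ d, Dset d → d = (d (Fin.last n) / d₀ (Fin.last n)) • d₀ := by
        intro d hd
        have h1 : Dset (d - (d (Fin.last n) / d₀ (Fin.last n)) • d₀) :=
          hDsub _ _ hd (hDsmul _ _ hDd₀)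
        have h2 : (d - (d (Fin.last n) / d₀ (Fin.last n)) • d₀) (Fin.last n) = 0 := by
          have : (d - (d (Fin.last n) / d₀ (Fin.last n)) • d₀) (Fin.last n)
              = d (Fin.last n) - d (Fin.last n) / d₀ (Fin.last n) * d₀ (Fin.last n) := rfl
          rw [this, div_mul_cancel₀ _ hd₀last, sub_self]
        have h3 := hzero _ h1 h2
        exact sub_eq_zero.1 h3
      set M := convexHull ℝ (V : Set (Fin (n + 1) → ℝ)) with hMdef
      have hlineM : ∀ x ∈ M, ∃ t : ℝ, x - p = t • d₀ := by
        intro x hx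
        exact ⟨(x - p) (Fin.last n) / d₀ (Fin.last n), hcol (x - p) (hDofM x hx)⟩
      have hMext : IsExtreme ℝ Δ M := by
        refine ⟨hVsubΔ, ?_⟩
        intro x₁ hx₁ x₂ hx₂ x hxM hxseg
        refine (?_ : x₁ ∈ M ∧ x₂ ∈ M).1
        by_cases hxp : x = p
        · exact habs x₁ x₂ hx₁ hx₂ (hxp ▸ hxseg)
        · obtain ⟨ε, hε, hmv⟩ := hmove (p - x) (by
            have h := hDsmul (-1) _ (hDofM x hxM)
            have h2 : (-1 : ℝ) • (x - p) = p - x := by module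
            rwa [h2] at h)
          set p' := p + ε • (p - x) with hp'def
          have hp'M : p' ∈ M := hmv ε (le_of_eq (abs_of_pos hε))
          have hp'Δ : p' ∈ Δ := hVsubΔ hp'M
          have hpseg2 : p ∈ openSegment ℝ x p' := by
            refine ⟨ε / (1 + ε), 1 / (1 + ε), by positivity, by positivity, ?_, ?_⟩
            · field_simp
              ring
            · rw [hp'def]
              match_scalars <;> field_simp <;> ring
          constructor
          · obtain ⟨w, hwseg, hwopen⟩ := seg_rot hpseg2 hxseg
            exact (habs x₁ w hx₁ (hΔconv.segment_subset hx₂ hp'Δ hwseg) hwopen).1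
          · rw [openSegment_symm] at hxseg
            obtain ⟨w, hwseg, hwopen⟩ := seg_rot hpseg2 hxseg
            exact (habs x₂ w hx₂ (hΔconv.segment_subset hx₁ hp'Δ hwseg) hwopen).1
      have hdirle : vectorSpan ℝ M ≤ Submodule.span ℝ {d₀} := by
        rw [vectorSpan_def]
        apply Submodule.span_le.2
        rintro _ ⟨x, hx, y, hy, rfl⟩
        obtain ⟨tx, htx⟩ := hlineM x hx
        obtain ⟨ty, hty⟩ := hlineM y hy
        apply Submodule.mem_span_singleton.2
        refine ⟨tx - ty, ?_⟩
        show (tx - ty) • d₀ = x - y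
        rw [sub_smul, ← htx, ← hty]
        abel
      have hdirge : Submodule.span ℝ {d₀} ≤ vectorSpan ℝ M := by
        rw [Submodule.span_le, Set.singleton_subset_iff]
        exact vsub_mem_vectorSpan ℝ hv₁M hpM
      have hMedge : IsEdge Δ M := by
        refine ⟨hMext, convex_convexHull ℝ _, ?_⟩
        rw [direction_affineSpan, le_antisymm hdirle hdirge, finrank_span_singleton hd₀ne]
      have hvertM := hpar.2 M hMedge ⟨p, hpM, hpa⟩ (hnoedge M hMedge) v₁ hv₁M p hpM
      have hd₀cast : ∀ j : Fin n, d₀ j.castSucc = 0 := by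
        intro j
        have h1 : v₁ j.castSucc = p j.castSucc := hvertM j
        show v₁ j.castSucc - p j.castSucc = 0
        rw [h1, sub_self]
      -- final contradiction with the hyperplane containing G
      obtain ⟨ε, hε, hmv⟩ := hmove d₀ hDd₀
      set q := p + (-ε) • d₀ with hqdef
      set r := p + ε • d₀ with hrdef
      have hqΔ : q ∈ Δ := hVsubΔ (hmv (-ε) (by rw [abs_neg, abs_of_pos hε]))
      have hrΔ : r ∈ Δ := hVsubΔ (hmv ε (by rw [abs_of_pos hε]))
      have hpseg : p ∈ openSegment ℝ q r := by
        refine ⟨1/2, 1/2, by norm_num, by norm_num, by norm_num, ?_⟩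
        rw [hqdef, hrdef]; module
      obtain ⟨hqG, hrG⟩ := (⟨hGext.2 hqΔ hrΔ hpG hpseg, hGext.right_mem_of_mem_openSegment hqΔ hrΔ hpG hpseg⟩ : q ∈ G ∧ r ∈ G)
      have hdiff : dotp r u - dotp q u = 2 * ε * (d₀ (Fin.last n) * u (Fin.last n)) := by
        rw [dotp, dotp, ← Finset.sum_sub_distrib]
        have hterm : ∀ i : Fin (n + 1), r i * u i - q i * u i = (2 * ε * d₀ i) * u i := by
          intro i
          have hr' : r i = p i + ε * d₀ i := rfl
          have hq' : q i = p i + (-ε) * d₀ i := rfl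
          rw [hr', hq']; ring
        rw [Finset.sum_congr rfl (fun i _ => hterm i)]
        rw [Finset.sum_eq_single (Fin.last n)]
        · ring
        · intro b _ hb
          rcases Fin.eq_castSucc_or_eq_last b with ⟨j, rfl⟩ | rfl
          · rw [hd₀cast j]; ring
          · exact absurd rfl hb
        · intro h
          exact absurd (Finset.mem_univ _) h
      rw [hGhyp q hqG, hGhyp r hrG, sub_self] at hdiff
      have : 2 * ε * (d₀ (Fin.last n) * u (Fin.last n)) ≠ 0 :=
        mul_ne_zero (by positivity) (mul_ne_zero hd₀last hu)
      exact this hdiff.symm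
  refine ⟨key, ?_⟩
  -- positive distance via compactness
  rcases Set.eq_empty_or_nonempty G with hGe | hGne
  · exact ⟨1, one_pos, fun x hx => absurd hx (by rw [hGe]; exact Set.notMem_empty x)⟩
  set K' := Δ ∩ {x : Fin (n + 1) → ℝ | x (Fin.last n) = a} with hK'def
  have hK'comp : IsCompact K' := hΔcomp.inter_right
    (isClosed_eq (continuous_apply (Fin.last n)) continuous_const)
  have hK'ne : K'.Nonempty := by
    obtain ⟨x₀, hx₀, hx₀a⟩ := hpar.1
    exact ⟨x₀, hx₀, hx₀a⟩
  have hprod : IsCompact (G ×ˢ K') := hGcomp.prod hK'comp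
  have hcont : ContinuousOn
      (fun q : (Fin (n + 1) → ℝ) × (Fin (n + 1) → ℝ) => dist q.1 q.2) (G ×ˢ K') :=
    continuous_dist.continuousOn
  obtain ⟨m, hmmem, hmin⟩ := hprod.exists_isMinOn (hGne.prod hK'ne) hcont
  have hm1 : m.1 ∈ G := hmmem.1
  have hm2 : m.2 ∈ K' := hmmem.2
  have hne : m.1 ≠ m.2 := by
    intro h
    have : m.1 ∈ G ∩ {x : Fin (n + 1) → ℝ | x (Fin.last n) = a} := ⟨hm1, by rw [h]; exact hm2.2⟩
    rw [key] at this
    exact this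
  refine ⟨dist m.1 m.2, dist_pos.2 hne, ?_⟩
  intro x hx y hyΔ hya
  exact hmin (Set.mk_mem_prod hx ⟨hyΔ, hya⟩)
end
end

section
/- Fix integers n ≥ 1 and 0 ≤ s < d. Let u₁,…,u_d ∈ ℝⁿ satisfy ⟨uᵢ, eₙ⟩ = 0 for all 1 ≤ i ≤ s and ⟨u_d, eₙ⟩ ≠ 0. Let β : ℝ^d → ℝⁿ be the linear map sending the standard basis vector eⱼ to uⱼ, and let 𝔫 = ker β. Suppose that for each index j with s < j < d there exist real numbers a_{j,0}, a_{j,1}, …, a_{j,s} such that the vector vⱼ := eⱼ − a_{j,0}·e_d − Σ_{i=1}^{s} a_{j,i}·eᵢ belongs to 𝔫. Then 𝔫 is the internal direct sum of the subspaces 𝔫 ∩ span{e₁,…,e_s} and span{vⱼ : s < j < d}; here 𝔫 ∩ span{e₁,…,e_s} is exactly the kernel of the restriction of β to span{e₁,…,e_s}. -/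
noncomputable section

def betaMap {m n : ℕ} (u : Fin m → Fin n → ℝ) : (Fin m → ℝ) →ₗ[ℝ] (Fin n → ℝ) where
  toFun x := ∑ j, x j • u j
  map_add' x y := by
    simp [add_smul, Finset.sum_add_distrib]
  map_smul' c x := by
    simp [Finset.smul_sum, smul_smul]

def vvec {m : ℕ} (s : ℕ) (a0 : Fin (m + 1) → ℝ) (a : Fin (m + 1) → Fin (m + 1) → ℝ)
    (j : Fin (m + 1)) : Fin (m + 1) → ℝ :=
  (Pi.single j 1 : Fin (m + 1) → ℝ) -
    a0 j • (Pi.single (Fin.last m) 1 : Fin (m + 1) → ℝ) -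
    ∑ i ∈ Finset.univ.filter (fun i : Fin (m + 1) => (i : ℕ) < s),
      a j i • (Pi.single i 1 : Fin (m + 1) → ℝ)

def firstCoordSpan (m s : ℕ) : Submodule ℝ (Fin (m + 1) → ℝ) :=
  Submodule.span ℝ
    {x : Fin (m + 1) → ℝ | ∃ i : Fin (m + 1), (i : ℕ) < s ∧ x = Pi.single i 1}

lemma vvec_apply_mid {m : ℕ} (s : ℕ) (a0 : Fin (m + 1) → ℝ)
    (a : Fin (m + 1) → Fin (m + 1) → ℝ) (j k : Fin (m + 1))
    (hk1 : s ≤ (k : ℕ)) (hk2 : (k : ℕ) < m) :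
    vvec s a0 a j k = if k = j then 1 else 0 := by
  have h1 : k ≠ Fin.last m := by
    intro e; rw [e] at hk2; simp at hk2
  unfold vvec
  simp only [Pi.sub_apply, Finset.sum_apply, Pi.smul_apply, Pi.single_apply, smul_eq_mul]
  rw [if_neg h1, Finset.sum_eq_zero, mul_zero, sub_zero, sub_zero]
  intro i hi
  simp only [Finset.mem_filter, Finset.mem_univ, true_and] at hi
  have : k ≠ i := by intro e; subst e; omega
  rw [if_neg this, mul_zero]

lemma mem_firstCoordSpan_iff {m s : ℕ} (x : Fin (m + 1) → ℝ) :
    x ∈ firstCoordSpan m s ↔ ∀ j : Fin (m + 1), s ≤ (j : ℕ) → x j = 0 := by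
  constructor
  · intro hx
    induction hx using Submodule.span_induction with
    | mem y hy =>
      obtain ⟨i, hi, rfl⟩ := hy
      intro j hj
      rw [Pi.single_apply, if_neg]
      intro e; subst e; omega
    | zero => intro j _; rfl
    | add y z _ _ ihy ihz => intro j hj; simp [ihy j hj, ihz j hj]
    | smul c y _ ihy => intro j hj; simp [ihy j hj]
  · intro h
    have hx : x = ∑ i ∈ Finset.univ.filter (fun i : Fin (m + 1) => (i : ℕ) < s),
        x i • (Pi.single i 1 : Fin (m + 1) → ℝ) := by
      funext k
      simp only [Finset.sum_apply, Pi.smul_apply, Pi.single_apply, smul_eq_mul]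
      by_cases hk : (k : ℕ) < s
      · rw [Finset.sum_eq_single_of_mem k (by simp [hk])]
        · simp
        · intro b hb hbk
          rw [if_neg (fun e => hbk e.symm), mul_zero]
      · rw [h k (le_of_not_gt hk)]
        refine (Finset.sum_eq_zero ?_).symm
        intro i hi
        simp only [Finset.mem_filter, Finset.mem_univ, true_and] at hi
        have : k ≠ i := by intro e; subst e; omega
        rw [if_neg this, mul_zero]
    rw [hx]
    exact Submodule.sum_mem _ fun i hi => Submodule.smul_mem _ _
      (Submodule.subset_span ⟨i, by simpa using hi, rfl⟩)

def piMap {m : ℕ} (s : ℕ) (a0 : Fin (m + 1) → ℝ) (a : Fin (m + 1) → Fin (m + 1) → ℝ) :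
    (Fin (m + 1) → ℝ) →ₗ[ℝ] (Fin (m + 1) → ℝ) where
  toFun x := ∑ j ∈ Finset.univ.filter (fun j : Fin (m + 1) => s ≤ (j : ℕ) ∧ (j : ℕ) < m),
      x j • vvec s a0 a j
  map_add' x y := by simp [add_smul, Finset.sum_add_distrib]
  map_smul' c x := by simp [Finset.smul_sum, smul_smul]

lemma piMap_apply_mid {m : ℕ} (s : ℕ) (a0 : Fin (m + 1) → ℝ)
    (a : Fin (m + 1) → Fin (m + 1) → ℝ) (x : Fin (m + 1) → ℝ) (k : Fin (m + 1))
    (hk1 : s ≤ (k : ℕ)) (hk2 : (k : ℕ) < m) :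
    piMap s a0 a x k = x k := by
  simp only [piMap, LinearMap.coe_mk, AddHom.coe_mk, Finset.sum_apply, Pi.smul_apply,
    smul_eq_mul]
  rw [Finset.sum_eq_single_of_mem k (by simp [hk1, hk2])]
  · rw [vvec_apply_mid s a0 a k k hk1 hk2, if_pos rfl, mul_one]
  · intro b hb hbk
    rw [vvec_apply_mid s a0 a b k hk1 hk2, if_neg (fun e => hbk e.symm), mul_zero]

lemma piMap_eq_zero_of_first {m s : ℕ} (a0 : Fin (m + 1) → ℝ)
    (a : Fin (m + 1) → Fin (m + 1) → ℝ) (x : Fin (m + 1) → ℝ)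
    (hx : x ∈ firstCoordSpan m s) : piMap s a0 a x = 0 := by
  rw [mem_firstCoordSpan_iff] at hx
  simp only [piMap, LinearMap.coe_mk, AddHom.coe_mk]
  refine Finset.sum_eq_zero fun j hj => ?_
  simp only [Finset.mem_filter, Finset.mem_univ, true_and] at hj
  rw [hx j hj.1, zero_smul]

lemma piMap_eq_self_of_span {m s : ℕ} (a0 : Fin (m + 1) → ℝ)
    (a : Fin (m + 1) → Fin (m + 1) → ℝ) (x : Fin (m + 1) → ℝ)
    (hx : x ∈ Submodule.span ℝ
      {x : Fin (m + 1) → ℝ | ∃ j : Fin (m + 1),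
        s ≤ (j : ℕ) ∧ (j : ℕ) < m ∧ x = vvec s a0 a j}) :
    piMap s a0 a x = x := by
  induction hx using Submodule.span_induction with
  | mem y hy =>
    obtain ⟨j, hj1, hj2, rfl⟩ := hy
    simp only [piMap, LinearMap.coe_mk, AddHom.coe_mk]
    rw [Finset.sum_eq_single_of_mem j (by simp [hj1, hj2])]
    · rw [vvec_apply_mid s a0 a j j hj1 hj2, if_pos rfl, one_smul]
    · intro b hb hbk
      simp only [Finset.mem_filter, Finset.mem_univ, true_and] at hb
      rw [vvec_apply_mid s a0 a j b hb.1 hb.2, if_neg hbk, zero_smul]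
  | zero => simp
  | add y z _ _ ihy ihz => rw [map_add, ihy, ihz]
  | smul c y _ ihy => rw [map_smul, ihy]

/-- Let `d = m + 1 > s ≥ 0` and let `u₁, …, u_d ∈ ℝ^{n+1}` satisfy `⟨u_i, e_{n+1}⟩ = 0`
for the first `s` indices and `⟨u_d, e_{n+1}⟩ ≠ 0`. Let `β : ℝ^d → ℝ^{n+1}` send `e_j`
to `u_j` and let `𝔫 = ker β`. Suppose for each `j` with `s ≤ j < d - 1` the vector
`v_j = e_j - a_{j,0} e_d - ∑_{i<s} a_{j,i} e_i` lies in `𝔫`. Then `𝔫` is the internal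
direct sum of `𝔫 ⊓ span{e₁,…,e_s}` and `span{v_j}`; moreover `𝔫 ⊓ span{e₁,…,e_s}` is
the kernel of the restriction of `β` to `span{e₁,…,e_s}`. -/
theorem kernel_direct_sum_decomposition
    (n m s : ℕ) (hs : s ≤ m)
    (u : Fin (m + 1) → Fin (n + 1) → ℝ)
    (hpar : ∀ i : Fin (m + 1), (i : ℕ) < s → u i (Fin.last n) = 0)
    (hlast : u (Fin.last m) (Fin.last n) ≠ 0)
    (a0 : Fin (m + 1) → ℝ) (a : Fin (m + 1) → Fin (m + 1) → ℝ)
    (hv : ∀ j : Fin (m + 1), s ≤ (j : ℕ) → (j : ℕ) < m →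
      vvec s a0 a j ∈ LinearMap.ker (betaMap u)) :
    Disjoint (LinearMap.ker (betaMap u) ⊓ firstCoordSpan m s)
      (Submodule.span ℝ
        {x : Fin (m + 1) → ℝ | ∃ j : Fin (m + 1),
          s ≤ (j : ℕ) ∧ (j : ℕ) < m ∧ x = vvec s a0 a j}) ∧
    (LinearMap.ker (betaMap u) ⊓ firstCoordSpan m s) ⊔
      (Submodule.span ℝ
        {x : Fin (m + 1) → ℝ | ∃ j : Fin (m + 1),
          s ≤ (j : ℕ) ∧ (j : ℕ) < m ∧ x = vvec s a0 a j}) =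
      LinearMap.ker (betaMap u) ∧
    LinearMap.ker (betaMap u) ⊓ firstCoordSpan m s =
      (LinearMap.ker ((betaMap u).domRestrict (firstCoordSpan m s))).map
        (firstCoordSpan m s).subtype := by
  set V := Submodule.span ℝ
      {x : Fin (m + 1) → ℝ | ∃ j : Fin (m + 1),
        s ≤ (j : ℕ) ∧ (j : ℕ) < m ∧ x = vvec s a0 a j} with hV
  have hVker : V ≤ LinearMap.ker (betaMap u) := by
    rw [hV, Submodule.span_le]
    rintro y ⟨j, hj1, hj2, rfl⟩
    exact hv j hj1 hj2
  refine ⟨?_, ?_, ?_⟩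
  · rw [Submodule.disjoint_def]
    intro x hx1 hx2
    have h1 : piMap s a0 a x = 0 := piMap_eq_zero_of_first a0 a x hx1.2
    have h2 : piMap s a0 a x = x := piMap_eq_self_of_span a0 a x hx2
    rw [h1] at h2; exact h2.symm
  · apply le_antisymm
    · exact sup_le inf_le_left hVker
    · intro x hx
      have hπV : piMap s a0 a x ∈ V := by
        simp only [piMap, LinearMap.coe_mk, AddHom.coe_mk]
        refine Submodule.sum_mem _ fun j hj => ?_
        simp only [Finset.mem_filter, Finset.mem_univ, true_and] at hj
        exact Submodule.smul_mem _ _ (Submodule.subset_span ⟨j, hj.1, hj.2, rfl⟩)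
      set y := x - piMap s a0 a x with hy
      have hyker : y ∈ LinearMap.ker (betaMap u) :=
        Submodule.sub_mem _ hx (hVker hπV)
      have hymid : ∀ k : Fin (m + 1), s ≤ (k : ℕ) → (k : ℕ) < m → y k = 0 := by
        intro k hk1 hk2
        simp only [hy, Pi.sub_apply, piMap_apply_mid s a0 a x k hk1 hk2, sub_self]
      have hylast : y (Fin.last m) = 0 := by
        have h0 : betaMap u y = 0 := hyker
        have h1 : (∑ j, y j • u j) (Fin.last n) = 0 := by
          rw [show (∑ j, y j • u j) = betaMap u y from rfl, h0]; rfl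
        simp only [Finset.sum_apply, Pi.smul_apply, smul_eq_mul] at h1
        rw [Finset.sum_eq_single (Fin.last m)] at h1
        · rcases mul_eq_zero.1 h1 with h | h
          · exact h
          · exact absurd h hlast
        · intro b _ hbne
          have hb : (b : ℕ) < m := by
            have := b.isLt
            have : (b : ℕ) ≠ m := fun e => hbne (Fin.ext (by simp [e]))
            omega
          by_cases hbs : (b : ℕ) < s
          · rw [hpar b hbs, mul_zero]
          · rw [hymid b (le_of_not_gt hbs) hb, zero_mul]
        · intro h; exact absurd (Finset.mem_univ _) h
      have hyfirst : y ∈ firstCoordSpan m s := by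
        rw [mem_firstCoordSpan_iff]
        intro k hk
        by_cases hkm : (k : ℕ) < m
        · exact hymid k hk hkm
        · have : k = Fin.last m := by
            have := k.isLt
            exact Fin.ext (by simp [Fin.last]; omega)
          rw [this]; exact hylast
      have : x = y + piMap s a0 a x := by rw [hy]; ring
      rw [this]
      exact Submodule.add_mem _
        (Submodule.mem_sup_left ⟨hyker, hyfirst⟩)
        (Submodule.mem_sup_right hπV)
  · rw [LinearMap.ker_domRestrict, Submodule.map_comap_subtype, inf_comm]
end
end
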